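/- Let p, q be coprime positive integers with p < q, let ℓ be a positive integer, set τ_ℓ = 2^{2ℓ-1}, and assume 3p < τ_ℓ and τ_ℓ ≤ 3p+3q. Then rank(A,b) = rank(A) if and only if q ∈ Γ_ℓ, where Γ_ℓ = {(2k-1)·τ_ℓ : k a positive integer} and (A,b) denotes the matrix A augmented by the column b. -/

import Mathlib

/-- The `(3p+3q+1) × (3p+3q-τ+1)` matrix whose `n`-th column is the coefficient
vector of `x^(n-1)·(1 + x^τ)` (indices here start at 0). -/
def cornerA (p q τ : ℕ) : Matrix (Fin (3*p+3*q+1)) (Fin (3*p+3*q-τ+1)) ℚ :=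
  Matrix.of fun m n => if (m : ℕ) = (n : ℕ) ∨ (m : ℕ) = (n : ℕ) + τ then 1 else 0

/-- The coefficient vector of `1 + x^(3p) + x^(3q) + x^(3p+3q)`. -/
def cornerb (p q : ℕ) : Fin (3*p+3*q+1) → ℚ :=
  fun m => if (m : ℕ) = 0 ∨ (m : ℕ) = 3*p ∨ (m : ℕ) = 3*q ∨ (m : ℕ) = 3*p+3*q
    then 1 else 0

/-- The augmented matrix `(A, b)`. -/
def cornerAb (p q τ : ℕ) : Matrix (Fin (3*p+3*q+1)) (Fin (3*p+3*q-τ+1+1)) ℚ :=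
  Matrix.of fun m n =>
    if h : (n : ℕ) < 3*p+3*q-τ+1 then cornerA p q τ m ⟨n, h⟩ else cornerb p q m

/-- `Γ_ℓ = {(2k-1)·τ_ℓ : k ∈ ℕ_{>0}}` where `τ_ℓ = 2^{2ℓ-1}`. -/
def GammaL (l : ℕ) : Set ℕ := {m | ∃ k : ℕ, 0 < k ∧ m = (2*k-1) * 2^(2*l-1)}

open Polynomial Matrix

lemma sum_if_eq_val {K : ℕ} (c : Fin K → ℚ) (m : ℕ) :
    (∑ n : Fin K, if (n : ℕ) = m then c n else 0)
      = if h : m < K then c ⟨m, h⟩ else 0 := by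
  split
  · next h =>
    rw [Finset.sum_eq_single (⟨m, h⟩ : Fin K)]
    · simp
    · intro n _ hn
      rw [if_neg]
      simpa [Fin.ext_iff] using hn
    · simp
  · next h =>
    apply Finset.sum_eq_zero
    intro n _
    rw [if_neg]
    exact fun hn => h (hn ▸ n.isLt)

lemma aug_rank_iff (p q τ : ℕ) :
    (cornerAb p q τ).rank = (cornerA p q τ).rank ↔
      ∃ c, (cornerA p q τ).mulVec c = cornerb p q := by
  set A := cornerA p q τ
  set b := cornerb p q
  have hcols : Set.range (cornerAb p q τ)ᵀ = insert b (Set.range Aᵀ) := by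
    ext v
    constructor
    · rintro ⟨n, rfl⟩
      by_cases h : (n : ℕ) < 3*p+3*q-τ+1
      · exact Or.inr ⟨⟨n, h⟩, by funext m; simp [cornerAb, Matrix.transpose_apply, h, A]; intro h'; omega⟩
      · exact Or.inl (by funext m; simp [cornerAb, Matrix.transpose_apply, h, b]; intro h'; omega)
    · rintro (rfl | ⟨n, rfl⟩)
      · refine ⟨Fin.last _, ?_⟩
        funext m
        simp [cornerAb, Matrix.transpose_apply, Fin.last, b]
      · refine ⟨⟨(n : ℕ), by omega⟩, ?_⟩
        funext m
        simp [cornerAb, Matrix.transpose_apply, n.isLt, A]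
        intro h'; have := n.isLt; omega
  rw [Matrix.rank, Matrix.rank, Matrix.range_mulVecLin, Matrix.range_mulVecLin]
  erw [hcols]
  constructor
  · intro hrank
    have hle : Submodule.span ℚ (Set.range Aᵀ) ≤
        Submodule.span ℚ (insert b (Set.range Aᵀ)) :=
      Submodule.span_mono (Set.subset_insert _ _)
    have heq := Submodule.eq_of_le_of_finrank_le hle hrank.le
    have hb : b ∈ Submodule.span ℚ (insert b (Set.range Aᵀ)) :=
      Submodule.subset_span (Set.mem_insert _ _)
    rw [← heq] at hb
    erw [← Matrix.range_mulVecLin] at hb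
    obtain ⟨c, hc⟩ := hb
    exact ⟨c, hc⟩
  · rintro ⟨c, hc⟩
    have hb : b ∈ Submodule.span ℚ (Set.range Aᵀ) := by
      erw [← Matrix.range_mulVecLin]; exact ⟨c, hc⟩
    rw [Submodule.span_insert_eq_span hb]
    rfl

lemma mulVec_cornerA (p q τ : ℕ) (hτ0 : 0 < τ)
    (c : Fin (3*p+3*q-τ+1) → ℚ) (m : Fin (3*p+3*q+1)) :
    (cornerA p q τ).mulVec c m
      = (if h : τ ≤ (m : ℕ) then c ⟨(m : ℕ) - τ, by have := m.2; omega⟩ else 0)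
        + (if h : (m : ℕ) < 3*p+3*q-τ+1 then c ⟨(m : ℕ), h⟩ else 0) := by
  have key : ∀ n : Fin (3*p+3*q-τ+1),
      (if (m : ℕ) = (n : ℕ) ∨ (m : ℕ) = (n : ℕ) + τ then (1 : ℚ) else 0) * c n
        = (if (n : ℕ) = (m : ℕ) - τ ∧ τ ≤ (m : ℕ) then c n else 0)
          + (if (n : ℕ) = (m : ℕ) then c n else 0) := by
    intro n
    by_cases h1 : (m : ℕ) = (n : ℕ)
    · rw [if_pos (Or.inl h1), if_neg (by omega), if_pos h1.symm, one_mul, zero_add]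
    · by_cases h2 : (m : ℕ) = (n : ℕ) + τ
      · rw [if_pos (Or.inr h2),
          if_pos (show (n : ℕ) = (m : ℕ) - τ ∧ τ ≤ (m : ℕ) by omega),
          if_neg (by omega), one_mul, add_zero]
      · rw [if_neg (by tauto), if_neg (by omega), if_neg (by omega), zero_mul, add_zero]
  have hmv : (cornerA p q τ).mulVec c m
      = ∑ n : Fin (3*p+3*q-τ+1),
          (if (m : ℕ) = (n : ℕ) ∨ (m : ℕ) = (n : ℕ) + τ then (1 : ℚ) else 0) * c n := rfl
  rw [hmv, Finset.sum_congr rfl fun n _ => key n, Finset.sum_add_distrib]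
  congr 1
  · by_cases hm : τ ≤ (m : ℕ)
    · simp only [hm, and_true]
      rw [sum_if_eq_val, dif_pos (show (m : ℕ) - τ < 3*p+3*q-τ+1 by
        have := m.2; omega), dif_pos trivial]
    · simp only [hm, and_false, if_false]
      simp
  · exact sum_if_eq_val c m

lemma coeff_B (p q : ℕ) (hp : 0 < p) (hpq : p < q) (m : ℕ) :
    ((1 + X ^ (3*p)) * (1 + X ^ (3*q)) : ℚ[X]).coeff m
      = if m = 0 ∨ m = 3*p ∨ m = 3*q ∨ m = 3*p+3*q then 1 else 0 := by
  have hexp : ((1 + X ^ (3*p)) * (1 + X ^ (3*q)) : ℚ[X])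
      = 1 + X ^ (3*p) + X ^ (3*q) + X ^ (3*p+3*q) := by ring
  rw [hexp]
  simp only [coeff_add, coeff_one, coeff_X_pow]
  split_ifs <;> first | omega | norm_num

lemma one_add_X_pow_ne_zero (n : ℕ) : ((1 : ℚ[X]) + X ^ n) ≠ 0 := by
  intro h
  have h0 := congrArg (Polynomial.eval 1) h
  simp at h0

lemma exists_mulVec_iff_dvd (p q τ : ℕ) (hp : 0 < p) (hpq : p < q) (hτ0 : 0 < τ)
    (hτ : τ ≤ 3*p+3*q) :
    (∃ c, (cornerA p q τ).mulVec c = cornerb p q) ↔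
      ((X ^ τ + 1 : ℚ[X]) ∣ (1 + X ^ (3*p)) * (1 + X ^ (3*q))) := by
  constructor
  · rintro ⟨c, hc⟩
    set g : ℚ[X] := ∑ n : Fin (3*p+3*q-τ+1), C (c n) * X ^ (n : ℕ) with hg
    have hgcoeff : ∀ m : ℕ, g.coeff m
        = if h : m < 3*p+3*q-τ+1 then c ⟨m, h⟩ else 0 := by
      intro m
      rw [hg, finset_sum_coeff]
      simp only [coeff_C_mul, coeff_X_pow, mul_ite, mul_one, mul_zero]
      rw [← sum_if_eq_val c m]
      exact Finset.sum_congr rfl fun n _ => if_congr eq_comm rfl rfl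
    refine ⟨g, ?_⟩
    apply Polynomial.ext
    intro m
    rw [show ((X ^ τ + 1) * g : ℚ[X]) = g * X ^ τ + g by ring, coeff_add,
      coeff_mul_X_pow', coeff_B p q hp hpq m, hgcoeff m, hgcoeff (m - τ)]
    by_cases hm : m < 3*p+3*q+1
    · have hcm := congrFun hc ⟨m, hm⟩
      rw [mulVec_cornerA p q τ hτ0 c ⟨m, hm⟩] at hcm
      simp only [cornerb] at hcm
      by_cases hτm : τ ≤ m
      · rw [if_pos hτm]
        rw [dif_pos hτm] at hcm
        rw [dif_pos (show m - τ < 3*p+3*q-τ+1 by omega)]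
        rw [← hcm]
      · rw [if_neg hτm]
        rw [dif_neg hτm] at hcm
        rw [← hcm]
    · rw [if_neg (by omega), dif_neg (by omega)]
      rw [if_pos (show τ ≤ m by omega), dif_neg (by omega)]
      norm_num
  · rintro ⟨g, hB⟩
    have hg0 : g ≠ 0 := by
      rintro rfl
      rw [mul_zero] at hB
      exact mul_ne_zero (one_add_X_pow_ne_zero (3*p)) (one_add_X_pow_ne_zero (3*q)) hB
    have hXτ : ((X : ℚ[X]) ^ τ + 1) ≠ 0 := by
      intro h
      have h0 := congrArg (Polynomial.eval 1) h
      simp at h0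
    have hdegτ : ((X : ℚ[X]) ^ τ + 1).natDegree = τ := by
      rw [← Polynomial.C_1, Polynomial.natDegree_X_pow_add_C]
    have hdeg1 : ((1 : ℚ[X]) + X ^ (3*p)).natDegree = 3*p := by
      rw [add_comm, ← Polynomial.C_1, Polynomial.natDegree_X_pow_add_C]
    have hdeg2 : ((1 : ℚ[X]) + X ^ (3*q)).natDegree = 3*q := by
      rw [add_comm, ← Polynomial.C_1, Polynomial.natDegree_X_pow_add_C]
    have hdegB : ((1 + X ^ (3*p)) * (1 + X ^ (3*q)) : ℚ[X]).natDegree = 3*p+3*q := by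
      rw [Polynomial.natDegree_mul (one_add_X_pow_ne_zero (3*p))
        (one_add_X_pow_ne_zero (3*q)), hdeg1, hdeg2]
    have hdegg : g.natDegree = 3*p+3*q - τ := by
      have h := Polynomial.natDegree_mul hXτ hg0
      rw [← hB, hdegB, hdegτ] at h
      omega
    refine ⟨fun n => g.coeff (n : ℕ), ?_⟩
    funext m
    rw [mulVec_cornerA p q τ hτ0 _ m]
    have hBc : cornerb p q m
        = (if τ ≤ (m : ℕ) then g.coeff ((m : ℕ) - τ) else 0) + g.coeff (m : ℕ) := by
      have h1 : cornerb p q m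
          = ((1 + X ^ (3*p)) * (1 + X ^ (3*q)) : ℚ[X]).coeff (m : ℕ) := by
        rw [coeff_B p q hp hpq]; rfl
      rw [h1, hB, show ((X ^ τ + 1) * g : ℚ[X]) = g * X ^ τ + g by ring, coeff_add,
        coeff_mul_X_pow']
    rw [hBc]
    congr 1
    · by_cases hmK : (m : ℕ) < 3*p+3*q-τ+1
      · rw [dif_pos hmK]
      · rw [dif_neg hmK]
        exact (Polynomial.coeff_eq_zero_of_natDegree_lt (by omega)).symm

lemma dvd_iff_gamma (p q l : ℕ) (hp : 0 < p) (hpq : p < q) (hl : 0 < l)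
    (hlt : 3*p < 2^(2*l-1)) :
    ((X ^ (2^(2*l-1)) + 1 : ℚ[X]) ∣ (1 + X ^ (3*p)) * (1 + X ^ (3*q))) ↔
      q ∈ GammaL l := by
  set τ : ℕ := 2^(2*l-1) with hτdef
  have hτ0 : 0 < τ := Nat.pow_pos (by norm_num)
  constructor
  · intro hdvd
    set ζ : ℂ := Complex.exp (Real.pi * Complex.I / τ) with hζ
    have hτc : (τ : ℂ) ≠ 0 := Nat.cast_ne_zero.mpr hτ0.ne'
    have hζτ : ζ ^ τ = -1 := by
      rw [hζ, ← Complex.exp_nat_mul,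
        show (τ : ℂ) * (Real.pi * Complex.I / τ) = Real.pi * Complex.I by field_simp,
        Complex.exp_pi_mul_I]
    have hπ : (Real.pi : ℂ) ≠ 0 := by
      exact_mod_cast Real.pi_ne_zero
    have key : ∀ m : ℕ, 0 < m → ζ ^ m = -1 → ∃ s : ℕ, m = (2*s+1) * τ := by
      intro m hm hzm
      rw [hζ, ← Complex.exp_nat_mul] at hzm
      have h1 : Complex.exp ((m : ℂ) * (Real.pi * Complex.I / τ) - Real.pi * Complex.I)
          = 1 := by
        rw [Complex.exp_sub, hzm, Complex.exp_pi_mul_I]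
        norm_num
      obtain ⟨n, hn⟩ := Complex.exp_eq_one_iff.mp h1
      have hmc : (m : ℂ) = (2*(n : ℂ)+1) * τ := by
        field_simp at hn
        have h3 : ((m : ℂ) - τ) * (Real.pi * Complex.I)
            = (2*(n : ℂ)*τ) * (Real.pi * Complex.I) := by linear_combination (Real.pi * Complex.I) * hn
        have h4 := mul_right_cancel₀ (mul_ne_zero hπ Complex.I_ne_zero) h3
        linear_combination h4
      have hmz : (m : ℤ) = (2*n+1) * τ := by exact_mod_cast hmc
      have hτz : (1 : ℤ) ≤ (τ : ℤ) := by exact_mod_cast hτ0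
      have hn0 : 0 ≤ n := by
        by_contra hc
        push_neg at hc
        have h2 : (2*n+1 : ℤ) ≤ -1 := by omega
        nlinarith [hmz, (show (0 : ℤ) < (m : ℤ) by exact_mod_cast hm)]
      lift n to ℕ using hn0 with s
      refine ⟨s, ?_⟩
      exact_mod_cast hmz
    have heval : ((1 : ℂ) + ζ ^ (3*p)) * (1 + ζ ^ (3*q)) = 0 := by
      obtain ⟨g, hg⟩ := hdvd
      have h := congrArg (Polynomial.aeval ζ) hg
      simp only [_root_.map_mul, _root_.map_add, _root_.map_pow, _root_.map_one, Polynomial.aeval_X] at h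
      rw [h, hζτ]
      ring
    have h3p : (1 : ℂ) + ζ ^ (3*p) ≠ 0 := by
      intro h
      have hz : ζ ^ (3*p) = -1 := by linear_combination h
      obtain ⟨s, hs⟩ := key (3*p) (by omega) hz
      have : τ ≤ (2*s+1) * τ := Nat.le_mul_of_pos_left τ (by omega)
      omega
    have h3q : ζ ^ (3*q) = -1 := by
      rcases mul_eq_zero.mp heval with h | h
      · exact absurd h h3p
      · linear_combination h
    obtain ⟨s, hs⟩ := key (3*q) (by omega) h3q
    have h3τ : ¬ (3 ∣ τ) := by
      intro h
      have := Nat.Prime.dvd_of_dvd_pow (p := 3) (by norm_num) (hτdef ▸ h)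
      omega
    have h3 : (3 : ℕ) ∣ 2*s+1 := by
      have hd : (3 : ℕ) ∣ (2*s+1) * τ := ⟨q, by omega⟩
      exact ((Nat.Prime.dvd_mul (by norm_num)).mp hd).resolve_right h3τ
    obtain ⟨t, ht⟩ := h3
    have hq : q = t * τ := by
      have h1 : 3*q = 3*(t*τ) := by rw [hs, ht]; ring
      omega
    have ht1 : t % 2 = 1 := by omega
    refine ⟨(t+1)/2, by omega, ?_⟩
    rw [hq]
    congr 1
    omega
  · rintro ⟨k, hk, rfl⟩
    have hodd : Odd (3*(2*k-1)) := by
      refine Nat.odd_mul.mpr ⟨⟨1, rfl⟩, ⟨k-1, by omega⟩⟩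
    have hdvd : ((X : ℚ[X]) ^ τ + 1) ∣ (X ^ τ) ^ (3*(2*k-1)) + 1 ^ (3*(2*k-1)) :=
      Odd.add_dvd_pow_add_pow _ _ hodd
    have he : ((X : ℚ[X]) ^ τ) ^ (3*(2*k-1)) + 1 ^ (3*(2*k-1))
        = 1 + X ^ (3*((2*k-1)*τ)) := by
      rw [← pow_mul, one_pow, add_comm]
      congr 2
      ring
    rw [he] at hdvd
    exact hdvd.mul_left _

theorem rank_eq_iff_q_mem (p q l : ℕ) (hp : 0 < p) (hpq : p < q)
    (hco : Nat.Coprime p q) (hl : 0 < l)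
    (hlt : 3*p < 2^(2*l-1)) (hτ : 2^(2*l-1) ≤ 3*p+3*q) :
    (cornerAb p q (2^(2*l-1))).rank = (cornerA p q (2^(2*l-1))).rank ↔
      q ∈ GammaL l := by
  rw [aug_rank_iff,
    exists_mulVec_iff_dvd p q _ hp hpq (Nat.pow_pos (by norm_num)) hτ,
    dvd_iff_gamma p q l hp hpq hl hlt]
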